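/- Let r ≥ m ≥ n ≥ 1 be integers satisfying r + 1 = m + n. Then for every integer k ≥ 1, ∑_{j=1}^{k} j^{m-1}(k-j)^{n-1} ≥ ((m-1)!(n-1)!/(r-1)!) · ∑_{j=1}^{k} (k-j)^{r-1}, where the convention 0^0 = 1 is used. -/

import Mathlib

open Finset

section AuxSumPow

lemma exists_low_aux {d : ℕ} {α : Type*} [LinearOrder α] (p : ℕ) (hp : p ≤ d) (x : Fin d → α) :
    ∃ S : Finset (Fin d), S.card = p ∧ ∀ i ∈ S, ∀ j, j ∉ S → x i ≤ x j := by
  induction p with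
  | zero => exact ⟨∅, rfl, by simp⟩
  | succ p ih =>
    obtain ⟨S, hcard, hS⟩ := ih (Nat.le_of_succ_le hp)
    have hne : Sᶜ.Nonempty := by
      rw [← Finset.card_pos, Finset.card_compl, hcard, Fintype.card_fin]
      omega
    obtain ⟨j₀, hj₀mem, hj₀min⟩ := Finset.exists_min_image Sᶜ x hne
    have hj₀S : j₀ ∉ S := Finset.mem_compl.mp hj₀mem
    refine ⟨insert j₀ S, by rw [Finset.card_insert_of_notMem hj₀S, hcard], ?_⟩
    intro i hi j hj
    have hjS : j ∈ Sᶜ := Finset.mem_compl.mpr fun h => hj (Finset.mem_insert_of_mem h)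
    rcases Finset.mem_insert.mp hi with rfl | hiS
    · exact hj₀min j hjS
    · exact hS i hiS j (Finset.mem_compl.mp hjS)

lemma card_le_val_aux (N a : ℕ) (ha : a < N) :
    (Finset.univ.filter fun y : Fin N => (y : ℕ) ≤ a).card = a + 1 := by
  rw [Finset.card_nbij' (fun y : Fin N => (y : ℕ)) (fun b => ⟨b % N, Nat.mod_lt _ (by omega)⟩)
      (s := Finset.univ.filter fun y : Fin N => (y : ℕ) ≤ a) (t := Finset.range (a+1))]
  · exact Finset.card_range (a+1)
  · intro y hy; simp at hy ⊢; omega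
  · intro b hb; simp at hb ⊢
    have : b % N = b := Nat.mod_eq_of_lt (by omega)
    omega
  · intro y hy; simp at hy ⊢
    have : (y : ℕ) % N = (y : ℕ) := Nat.mod_eq_of_lt y.isLt
    exact Fin.ext this
  · intro b hb; simp at hb ⊢
    exact Nat.mod_eq_of_lt (by omega)

lemma card_ge_val_aux (N a : ℕ) :
    (Finset.univ.filter fun y : Fin N => a ≤ (y : ℕ)).card = N - a := by
  rcases Nat.eq_zero_or_pos N with rfl | hN
  · simp
  rw [Finset.card_nbij' (fun y : Fin N => (y : ℕ) - a) (fun b => ⟨(b + a) % N, Nat.mod_lt _ hN⟩)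
      (s := Finset.univ.filter fun y : Fin N => a ≤ (y : ℕ)) (t := Finset.range (N - a))]
  · exact Finset.card_range _
  · intro y hy; simp at hy ⊢; have := y.isLt; omega
  · intro b hb; simp at hb ⊢
    have : (b + a) % N = b + a := Nat.mod_eq_of_lt (by omega)
    omega
  · intro y hy; simp at hy ⊢
    have h2 : ((y : ℕ) - a + a) % N = (y : ℕ) - a + a := Nat.mod_eq_of_lt (by have := y.isLt; omega)
    exact Fin.ext (by simp only [h2]; omega)
  · intro b hb; simp at hb ⊢
    have : (b + a) % N = b + a := Nat.mod_eq_of_lt (by omega)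
    simp only [this]; omega

lemma card_valid_aux (N d : ℕ) (S : Finset (Fin d)) (hS : Sᶜ.Nonempty) :
    (Finset.univ.filter fun x : Fin d → Fin N => ∀ i ∈ S, ∀ j, j ∉ S → x i ≤ x j).card
      = ∑ a ∈ Finset.range N,
          ((a + 1) ^ S.card * (N - a) ^ (Sᶜ.card) - (a + 1) ^ S.card * (N - a - 1) ^ (Sᶜ.card)) := by
  have hkey : ∀ x ∈ (Finset.univ.filter fun x : Fin d → Fin N =>
      ∀ i ∈ S, ∀ j, j ∉ S → x i ≤ x j),
      (((Sᶜ.image x).min' (hS.image x) : Fin N) : ℕ) ∈ Finset.range N := by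
    intro x _; exact Finset.mem_range.mpr (Fin.isLt _)
  rw [Finset.card_eq_sum_card_fiberwise hkey]
  refine Finset.sum_congr rfl fun a ha => ?_
  have haN : a < N := Finset.mem_range.mp ha
  set B : Fin d → Finset (Fin N) := fun i =>
    if i ∈ S then Finset.univ.filter (fun y : Fin N => (y : ℕ) ≤ a)
    else Finset.univ.filter (fun y : Fin N => a ≤ (y : ℕ)) with hB
  set B' : Fin d → Finset (Fin N) := fun i =>
    if i ∈ S then Finset.univ.filter (fun y : Fin N => (y : ℕ) ≤ a)
    else Finset.univ.filter (fun y : Fin N => a + 1 ≤ (y : ℕ)) with hB'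
  have hsub : Fintype.piFinset B' ⊆ Fintype.piFinset B := by
    refine Fintype.piFinset_subset _ _ fun i => ?_
    simp only [hB, hB']
    split
    · exact subset_rfl
    · intro y hy; simp at hy ⊢; omega
  have hset : ((Finset.univ.filter fun x : Fin d → Fin N =>
        ∀ i ∈ S, ∀ j, j ∉ S → x i ≤ x j).filter
        (fun x => (((Sᶜ.image x).min' (hS.image x) : Fin N) : ℕ) = a))
      = Fintype.piFinset B \ Fintype.piFinset B' := by
    ext x
    simp only [Finset.mem_filter, Finset.mem_univ, true_and, Finset.mem_sdiff,
      Fintype.mem_piFinset]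
    constructor
    · rintro ⟨hval, hmin⟩
      obtain ⟨j₁, hj₁, hxj₁⟩ := Finset.mem_image.mp (Finset.min'_mem (Sᶜ.image x) (hS.image x))
      have hj₁S : j₁ ∉ S := Finset.mem_compl.mp hj₁
      have hxj₁a : (x j₁ : ℕ) = a := by rw [hxj₁]; exact hmin
      constructor
      · intro i
        simp only [hB]
        split
        · next hiS =>
          simp only [Finset.mem_filter, Finset.mem_univ, true_and]
          calc (x i : ℕ) ≤ (x j₁ : ℕ) := hval i hiS j₁ hj₁S
            _ = a := hxj₁a
        · next hiS =>
          simp only [Finset.mem_filter, Finset.mem_univ, true_and]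
          have : (Sᶜ.image x).min' (hS.image x) ≤ x i :=
            Finset.min'_le _ _ (Finset.mem_image_of_mem x (Finset.mem_compl.mpr hiS))
          calc a = (((Sᶜ.image x).min' (hS.image x) : Fin N) : ℕ) := hmin.symm
            _ ≤ (x i : ℕ) := this
      · intro hall
        have := hall j₁
        simp only [hB', if_neg hj₁S, Finset.mem_filter, Finset.mem_univ, true_and] at this
        omega
    · rintro ⟨hall, hnall⟩
      obtain ⟨i₀, hi₀⟩ := not_forall.mp hnall
      have hi₀S : i₀ ∉ S := by
        intro h
        apply hi₀
        have := hall i₀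
        simp only [hB, if_pos h] at this
        simp only [hB', if_pos h]
        exact this
      have h1 := hall i₀
      simp only [hB, if_neg hi₀S, Finset.mem_filter, Finset.mem_univ, true_and] at h1
      simp only [hB', if_neg hi₀S, Finset.mem_filter, Finset.mem_univ, true_and] at hi₀
      have hxi₀ : (x i₀ : ℕ) = a := by omega
      have hge : ∀ j, j ∉ S → a ≤ (x j : ℕ) := by
        intro j hj
        have := hall j
        simp only [hB, if_neg hj, Finset.mem_filter, Finset.mem_univ, true_and] at this
        exact this
      have hle : ∀ i ∈ S, (x i : ℕ) ≤ a := by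
        intro i hi
        have := hall i
        simp only [hB, if_pos hi, Finset.mem_filter, Finset.mem_univ, true_and] at this
        exact this
      refine ⟨fun i hi j hj => ?_, ?_⟩
      · have := hle i hi; have := hge j hj
        exact Fin.le_def.mpr (by omega)
      · have h2 : (Sᶜ.image x).min' (hS.image x) = x i₀ := by
          refine le_antisymm (Finset.min'_le _ _
            (Finset.mem_image_of_mem x (Finset.mem_compl.mpr hi₀S))) ?_
          refine Finset.le_min' _ _ _ fun y hy => ?_
          obtain ⟨j, hj, rfl⟩ := Finset.mem_image.mp hy
          have := hge j (Finset.mem_compl.mp hj)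
          exact Fin.le_def.mpr (by omega)
        rw [h2, hxi₀]
  rw [hset, Finset.card_sdiff_of_subset hsub, Fintype.card_piFinset, Fintype.card_piFinset]
  have h1 : (∏ i : Fin d, (B i).card) = (a + 1) ^ S.card * (N - a) ^ Sᶜ.card := by
    rw [← Finset.prod_mul_prod_compl S]
    congr 1
    · rw [Finset.prod_congr rfl (fun i hi => by
        simp only [hB, if_pos hi]; rw [card_le_val_aux N a haN]), Finset.prod_const]
    · rw [Finset.prod_congr rfl (fun i hi => by
        simp only [hB, if_neg (Finset.mem_compl.mp hi)]; rw [card_ge_val_aux N a]),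
        Finset.prod_const]
  have h2 : (∏ i : Fin d, (B' i).card) = (a + 1) ^ S.card * (N - a - 1) ^ Sᶜ.card := by
    rw [← Finset.prod_mul_prod_compl S]
    congr 1
    · rw [Finset.prod_congr rfl (fun i hi => by
        simp only [hB', if_pos hi]; rw [card_le_val_aux N a haN]), Finset.prod_const]
    · rw [Finset.prod_congr rfl (fun i hi => by
        simp only [hB', if_neg (Finset.mem_compl.mp hi)]; rw [card_ge_val_aux N (a+1)]),
        Finset.prod_const]
      rw [Nat.sub_sub]
  rw [h1, h2]

lemma master_aux (N p q : ℕ) (hq : 1 ≤ q) :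
    N ^ (p + q) ≤ (p + q).choose p *
      ∑ a ∈ Finset.range N, ((a + 1) ^ p * (N - a) ^ q - (a + 1) ^ p * (N - a - 1) ^ q) := by
  set d := p + q with hd
  have hpd : p ≤ d := Nat.le_add_right p q
  classical
  have hcardfun : N ^ d = (Finset.univ : Finset (Fin d → Fin N)).card := by
    rw [Finset.card_univ, Fintype.card_fun, Fintype.card_fin, Fintype.card_fin]
  rw [hcardfun]
  set target := (Finset.powersetCard p (Finset.univ : Finset (Fin d))).sigma
      (fun S => Finset.univ.filter fun x : Fin d → Fin N =>
        ∀ i ∈ S, ∀ j, j ∉ S → x i ≤ x j) with htarget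
  have hle : (Finset.univ : Finset (Fin d → Fin N)).card ≤ target.card := by
    apply Finset.card_le_card_of_injOn
      (fun x => ⟨(exists_low_aux p hpd x).choose, x⟩)
    · intro x _
      obtain ⟨hcard, hval⟩ := (exists_low_aux p hpd x).choose_spec
      rw [htarget, Finset.mem_coe, Finset.mem_sigma]
      exact ⟨Finset.mem_powersetCard_univ.mpr hcard, by
        simp only [Finset.mem_filter, Finset.mem_univ, true_and]; exact hval⟩
    · intro x _ y _ h
      exact eq_of_heq (Sigma.mk.inj_iff.mp h).2
  refine hle.trans ?_
  rw [htarget, Finset.card_sigma]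
  have hTval : ∀ S ∈ Finset.powersetCard p (Finset.univ : Finset (Fin d)),
      (Finset.univ.filter fun x : Fin d → Fin N =>
        ∀ i ∈ S, ∀ j, j ∉ S → x i ≤ x j).card
      = ∑ a ∈ Finset.range N, ((a + 1) ^ p * (N - a) ^ q - (a + 1) ^ p * (N - a - 1) ^ q) := by
    intro S hs
    have hScard : S.card = p := Finset.mem_powersetCard_univ.mp hs
    have hScompl : Sᶜ.card = q := by
      rw [Finset.card_compl, hScard, Fintype.card_fin]; omega
    have hne : Sᶜ.Nonempty := by rw [← Finset.card_pos, hScompl]; omega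
    rw [card_valid_aux N d S hne, hScard, hScompl]
  rw [Finset.sum_congr rfl hTval, Finset.sum_const, Finset.card_powersetCard,
    Finset.card_univ, Fintype.card_fin, smul_eq_mul]

def Apq (p q K : ℕ) : ℕ := ∑ j ∈ Finset.Icc 1 K, j ^ p * (K - j) ^ q

lemma Apq_range (p q K : ℕ) : Apq p q K = ∑ a ∈ Finset.range K, (a+1)^p * (K-(a+1))^q := by
  rw [Apq]
  refine Finset.sum_nbij' (fun j => j - 1) (fun a => a + 1) ?_ ?_ ?_ ?_ ?_
  · intro j hj; simp at hj ⊢; omega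
  · intro a ha; simp at ha ⊢; omega
  · intro j hj; simp at hj ⊢; omega
  · intro a ha; simp at ha ⊢
  · intro j hj; simp at hj
    have h1 : j - 1 + 1 = j := by omega
    rw [h1]

lemma bridge_aux (p q N : ℕ) (hq : 1 ≤ q) :
    Apq p q N + ∑ a ∈ Finset.range N, ((a + 1) ^ p * (N - a) ^ q - (a + 1) ^ p * (N - a - 1) ^ q)
      = Apq p q (N + 1) := by
  rw [Apq_range, Apq_range, ← Finset.sum_add_distrib]
  rw [Finset.sum_range_succ]
  have hlast : (N + 1) ^ p * (N + 1 - (N + 1)) ^ q = 0 := by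
    simp [Nat.sub_self, zero_pow (by omega : q ≠ 0)]
  rw [hlast, add_zero]
  refine Finset.sum_congr rfl fun a ha => ?_
  have haN : a < N := Finset.mem_range.mp ha
  have h1 : N - (a + 1) = N - a - 1 := by omega
  have h2 : (N - a - 1) ^ q ≤ (N - a) ^ q := Nat.pow_le_pow_left (by omega) q
  have h3 : N + 1 - (a + 1) = N - a := by omega
  rw [h1, h3]
  have h4 : (a+1)^p * (N-a-1)^q ≤ (a+1)^p * (N-a)^q := Nat.mul_le_mul_left _ h2
  omega

lemma natmain_aux (p q : ℕ) (hq : 1 ≤ q) (k : ℕ) :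
    ∑ i ∈ Finset.range k, i ^ (p + q) ≤ (p + q).choose p * Apq p q k := by
  induction k with
  | zero => simp
  | succ k ih =>
    rw [Finset.sum_range_succ, ← bridge_aux p q k hq, Nat.mul_add]
    exact Nat.add_le_add ih (master_aux k p q hq)

lemma B_eq_aux (e k : ℕ) : ∑ j ∈ Finset.Icc 1 k, (k - j) ^ e = ∑ i ∈ Finset.range k, i ^ e := by
  refine Finset.sum_nbij' (fun j => k - j) (fun i => k - i) ?_ ?_ ?_ ?_ ?_
  · intro j hj; simp at hj ⊢; omega
  · intro i hi; simp at hi ⊢; omega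
  · intro j hj; simp at hj ⊢; omega
  · intro i hi; simp at hi ⊢; omega
  · intro j hj; rfl

end AuxSumPow

/-- Lemma 1: for integers `r ≥ m ≥ n ≥ 1` with `r + 1 = m + n` and every `k ≥ 1`,
`∑_{j=1}^k j^{m-1}(k-j)^{n-1} ≥ ((m-1)!(n-1)!/(r-1)!) ∑_{j=1}^k (k-j)^{r-1}`,
with the convention `0^0 = 1`. -/
theorem sum_pow_ge_s_one (r m n : ℕ) (hn : 1 ≤ n) (hnm : n ≤ m) (hmr : m ≤ r)
    (hsum : r + 1 = m + n) (k : ℕ) (hk : 1 ≤ k) :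
    (((m - 1).factorial * (n - 1).factorial : ℕ) : ℝ) / ((r - 1).factorial : ℝ) *
        ∑ j ∈ Finset.Icc 1 k, ((k - j : ℕ) : ℝ) ^ (r - 1) ≤
      ∑ j ∈ Finset.Icc 1 k, (j : ℝ) ^ (m - 1) * ((k - j : ℕ) : ℝ) ^ (n - 1) := by
  have hBcast : ∑ j ∈ Finset.Icc 1 k, ((k - j : ℕ) : ℝ) ^ (r - 1)
      = ((∑ i ∈ Finset.range k, i ^ (r - 1) : ℕ) : ℝ) := by
    rw [← B_eq_aux (r-1) k]
    push_cast
    rfl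
  have hAcast : ∑ j ∈ Finset.Icc 1 k, (j : ℝ) ^ (m - 1) * ((k - j : ℕ) : ℝ) ^ (n - 1)
      = ((Apq (m-1) (n-1) k : ℕ) : ℝ) := by
    rw [Apq]
    push_cast
    rfl
  rw [hBcast, hAcast]
  rcases Nat.lt_or_ge n 2 with hn2 | hn2
  · -- n = 1, so r = m
    have hn1 : n = 1 := by omega
    have hrm : r = m := by omega
    subst hn1 hrm
    simp only [Nat.sub_self, Nat.factorial_zero, Nat.mul_one]
    rw [div_self (by positivity : ((r-1).factorial : ℝ) ≠ 0), one_mul]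
    rw [Nat.cast_le]
    calc ∑ i ∈ Finset.range k, i ^ (r - 1)
        ≤ ∑ i ∈ Finset.range k, (i+1) ^ (r - 1) :=
          Finset.sum_le_sum fun i _ => Nat.pow_le_pow_left (by omega) _
      _ = Apq (r-1) 0 k := by
          rw [Apq_range]
          exact Finset.sum_congr rfl fun a _ => by rw [pow_zero, Nat.mul_one]
  · -- n ≥ 2
    have hq : 1 ≤ n - 1 := by omega
    have hd : (m - 1) + (n - 1) = r - 1 := by omega
    have hmain : ∑ i ∈ Finset.range k, i ^ (r - 1)
        ≤ (r-1).choose (m-1) * Apq (m-1) (n-1) k := by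
      have := natmain_aux (m-1) (n-1) hq k
      rwa [hd] at this
    have hfact : (r-1).choose (m-1) * ((m-1).factorial * (n-1).factorial)
        = (r-1).factorial := by
      have h := Nat.choose_mul_factorial_mul_factorial (show m - 1 ≤ r - 1 by omega)
      have h2 : r - 1 - (m - 1) = n - 1 := by omega
      rw [h2] at h
      rw [← h]
      ring
    have hFpos : (0:ℝ) < ((r-1).factorial : ℝ) := by positivity
    rw [div_mul_eq_mul_div, div_le_iff₀ hFpos]
    have : ((m - 1).factorial * (n - 1).factorial) * (∑ i ∈ Finset.range k, i ^ (r - 1))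
        ≤ Apq (m-1) (n-1) k * (r-1).factorial := by
      calc ((m - 1).factorial * (n - 1).factorial) * (∑ i ∈ Finset.range k, i ^ (r - 1))
          ≤ ((m - 1).factorial * (n - 1).factorial) * ((r-1).choose (m-1) * Apq (m-1) (n-1) k) :=
            Nat.mul_le_mul_left _ hmain
        _ = Apq (m-1) (n-1) k * ((r-1).choose (m-1) * ((m-1).factorial * (n-1).factorial)) := by
            ring
        _ = Apq (m-1) (n-1) k * (r-1).factorial := by rw [hfact]
    calc (((m - 1).factorial * (n - 1).factorial : ℕ) : ℝ)
          * ((∑ i ∈ Finset.range k, i ^ (r - 1) : ℕ) : ℝ)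
        = (((m - 1).factorial * (n - 1).factorial * ∑ i ∈ Finset.range k, i ^ (r - 1) : ℕ) : ℝ) := by
          push_cast; ring
      _ ≤ ((Apq (m-1) (n-1) k * (r-1).factorial : ℕ) : ℝ) := by exact_mod_cast this
      _ = ((Apq (m-1) (n-1) k : ℕ) : ℝ) * ((r-1).factorial : ℝ) := by push_cast; ring
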